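/- Response model error, myopic-form bound. Fix a leader policy π with quantal response ν^π, and suppose B_A > 0 satisfies ‖A_h^π‖_∞ ≤ B_A and ‖Ã_h‖_∞ ≤ B_A for all h = 1,…,H. For h ∈ [H] and (s,b) ∈ S×B define Δ̃_h⁽¹⁾(s,b) = (E_{s,b} − E_s)[ Σ_{l=h}^H γ^{l−h}·(Q̃_l − r_l^π − γ·P_l^π Ṽ_{l+1})(s_l,b_l) ], where (P_l^π Ṽ_{l+1})(s,b) = Σ_{s'} P_l^π(s'|s,b)·Ṽ_{l+1}(s'). Then Σ_{h=1}^H H·E^{π,ν^π}[ ‖(ν̃_h − ν_h^π)(·|s_h)‖₁ ] ≤ C⁽⁰⁾·Σ_{h=1}^H E^{π,ν^π}[ |Δ̃_h⁽¹⁾(s_h,b_h)| ] + C⁽¹⁾·Σ_{h=1}^H E^{π,ν^π}[ (Ã_h(s_h,b_h) − A_h^π(s_h,b_h))² ], where C⁽⁰⁾ = 2ηH and C⁽¹⁾ = η²·H·(1 + 4·eff_H(γ))·exp(2ηB_A). -/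

import Mathlib

open Finset

noncomputable section

namespace QSE

variable {S A B : Type}

/-- Follower reward under the leader policy: `r_h^π(s,b) = Σ_a π_h(a|s,b) r_h(s,a,b)`. -/
def rPol [Fintype A] (pol : ℕ → S → B → A → ℝ) (r : ℕ → S → A → B → ℝ)
    (h : ℕ) (s : S) (b : B) : ℝ :=
  ∑ a, pol h s b a * r h s a b

/-- Transition under the leader policy: `P_h^π(s'|s,b) = Σ_a π_h(a|s,b) P_h(s'|s,a,b)`. -/
def pPol [Fintype A] (pol : ℕ → S → B → A → ℝ) (P : ℕ → S → A → B → S → ℝ)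
    (h : ℕ) (s : S) (b : B) (s' : S) : ℝ :=
  ∑ a, pol h s b a * P h s a b s'

/-- Fuel-indexed soft state value: `vAux n = V_{H−n}^π` (steps are 0-based, `V_H ≡ 0`). -/
def vAux [Fintype S] [Fintype A] [Fintype B] (η γ : ℝ) (H : ℕ)
    (pol : ℕ → S → B → A → ℝ) (r : ℕ → S → A → B → ℝ)
    (P : ℕ → S → A → B → S → ℝ) : ℕ → S → ℝ
  | 0, _ => 0
  | n + 1, s =>
      η⁻¹ * Real.log (∑ b, Real.exp (η * (rPol pol r (H - (n + 1)) s b +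
        γ * ∑ s', pPol pol P (H - (n + 1)) s b s' * vAux η γ H pol r P n s')))

/-- Follower soft state value `V_h^π` (0-based step `h`, so `V_H ≡ 0`). -/
def softV [Fintype S] [Fintype A] [Fintype B] (η γ : ℝ) (H : ℕ)
    (pol : ℕ → S → B → A → ℝ) (r : ℕ → S → A → B → ℝ)
    (P : ℕ → S → A → B → S → ℝ) (h : ℕ) (s : S) : ℝ :=
  vAux η γ H pol r P (H - h) s

/-- Follower soft action value `Q_h^π(s,b) = r_h^π(s,b) + γ Σ_{s'} P_h^π(s'|s,b) V_{h+1}^π(s')`. -/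
def softQ [Fintype S] [Fintype A] [Fintype B] (η γ : ℝ) (H : ℕ)
    (pol : ℕ → S → B → A → ℝ) (r : ℕ → S → A → B → ℝ)
    (P : ℕ → S → A → B → S → ℝ) (h : ℕ) (s : S) (b : B) : ℝ :=
  rPol pol r h s b + γ * ∑ s', pPol pol P h s b s' * softV η γ H pol r P (h + 1) s'

/-- Follower advantage `A_h^π = Q_h^π − V_h^π`. -/
def softA [Fintype S] [Fintype A] [Fintype B] (η γ : ℝ) (H : ℕ)
    (pol : ℕ → S → B → A → ℝ) (r : ℕ → S → A → B → ℝ)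
    (P : ℕ → S → A → B → S → ℝ) (h : ℕ) (s : S) (b : B) : ℝ :=
  softQ η γ H pol r P h s b - softV η γ H pol r P h s

/-- Quantal response `ν_h^π(b|s) = exp(η A_h^π(s,b))`. -/
def qr [Fintype S] [Fintype A] [Fintype B] (η γ : ℝ) (H : ℕ)
    (pol : ℕ → S → B → A → ℝ) (r : ℕ → S → A → B → ℝ)
    (P : ℕ → S → A → B → S → ℝ) (h : ℕ) (s : S) (b : B) : ℝ :=
  Real.exp (η * softA η γ H pol r P h s b)

/-- Marginal law of the state `s_h` along the trajectory generated by `(ρ₀, ν, π, P)`. -/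
def margS [Fintype S] [Fintype A] [Fintype B] (rho0 : S → ℝ)
    (pol : ℕ → S → B → A → ℝ) (nu : ℕ → S → B → ℝ)
    (P : ℕ → S → A → B → S → ℝ) : ℕ → S → ℝ
  | 0, s => rho0 s
  | h + 1, s' => ∑ s, ∑ b, ∑ a,
      margS rho0 pol nu P h s * nu h s b * pol h s b a * P h s a b s'

/-- Integral operator `(T_h^{π,ν} f)(s) = Σ_{a,b} π_h(a|s,b) ν_h(b|s) f(s,a,b)`. -/
def Top [Fintype A] [Fintype B] (pol : ℕ → S → B → A → ℝ) (nu : ℕ → S → B → ℝ)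
    (h : ℕ) (f : S → A → B → ℝ) (s : S) : ℝ :=
  ∑ b, ∑ a, nu h s b * pol h s b a * f s a b

/-- Leader's value `J(π) = E^{π,ν^π}[Σ_{h<H} u_h(s_h,a_h,b_h)]`. -/
def Jval [Fintype S] [Fintype A] [Fintype B] (η γ : ℝ) (H : ℕ) (rho0 : S → ℝ)
    (pol : ℕ → S → B → A → ℝ) (r : ℕ → S → A → B → ℝ)
    (P : ℕ → S → A → B → S → ℝ) (u : ℕ → S → A → B → ℝ) : ℝ :=
  ∑ h ∈ Finset.range H, ∑ s, ∑ b, ∑ a,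
    margS rho0 pol (qr η γ H pol r P) P h s * qr η γ H pol r P h s b *
      pol h s b a * u h s a b

/-- Fuel-indexed conditional discounted cumulative value:
`cumAux n s b = E[Σ_{l=H−n}^{H−1} γ^{l−(H−n)} X_l(s_l,b_l) | s_{H−n} = s, b_{H−n} = b]`. -/
def cumAux [Fintype S] [Fintype A] [Fintype B] (γ : ℝ) (H : ℕ)
    (pol : ℕ → S → B → A → ℝ) (nu : ℕ → S → B → ℝ)
    (P : ℕ → S → A → B → S → ℝ) (X : ℕ → S → B → ℝ) : ℕ → S → B → ℝ
  | 0, _, _ => 0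
  | n + 1, s, b => X (H - (n + 1)) s b +
      γ * ∑ a, pol (H - (n + 1)) s b a * ∑ s', P (H - (n + 1)) s a b s' *
          ∑ b', nu (H - n) s' b' * cumAux γ H pol nu P X n s' b'

/-- `cumSB h s b = E[Σ_{l=h}^{H−1} γ^{l−h} X_l(s_l,b_l) | s_h = s, b_h = b]`. -/
def cumSB [Fintype S] [Fintype A] [Fintype B] (γ : ℝ) (H : ℕ)
    (pol : ℕ → S → B → A → ℝ) (nu : ℕ → S → B → ℝ)
    (P : ℕ → S → A → B → S → ℝ) (X : ℕ → S → B → ℝ) (h : ℕ) (s : S) (b : B) : ℝ :=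
  cumAux γ H pol nu P X (H - h) s b

/-- Estimated soft state value `Ṽ_h` derived from `Q̃` (with `Ṽ_H ≡ 0`). -/
def vTil [Fintype B] (η : ℝ) (H : ℕ) (Qt : ℕ → S → B → ℝ) (h : ℕ) (s : S) : ℝ :=
  if h < H then η⁻¹ * Real.log (∑ b, Real.exp (η * Qt h s b)) else 0

/-- Estimated advantage `Ã_h = Q̃_h − Ṽ_h`. -/
def aTil [Fintype B] (η : ℝ) (H : ℕ) (Qt : ℕ → S → B → ℝ) (h : ℕ) (s : S) (b : B) : ℝ :=
  Qt h s b - vTil η H Qt h s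

/-- Estimated quantal response `ν̃_h(b|s) = exp(η Ã_h(s,b))`. -/
def nuTil [Fintype B] (η : ℝ) (H : ℕ) (Qt : ℕ → S → B → ℝ) (h : ℕ) (s : S) (b : B) : ℝ :=
  Real.exp (η * aTil η H Qt h s b)

/-- Follower Bellman residual `(Q̃_h − r_h^π − γ P_h^π Ṽ_{h+1})(s,b)`. -/
def bres [Fintype S] [Fintype A] [Fintype B] (η γ : ℝ) (H : ℕ)
    (pol : ℕ → S → B → A → ℝ) (r : ℕ → S → A → B → ℝ)
    (P : ℕ → S → A → B → S → ℝ) (Qt : ℕ → S → B → ℝ) (h : ℕ) (s : S) (b : B) : ℝ :=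
  Qt h s b - rPol pol r h s b - γ * ∑ s', pPol pol P h s b s' * vTil η H Qt (h + 1) s'

/-- First-order quantal response error
`Δ̃_h⁽¹⁾(s,b) = (E_{s,b} − E_s)[Σ_{l=h}^{H−1} γ^{l−h}(Q̃_l − r_l^π − γ P_l^π Ṽ_{l+1})(s_l,b_l)]`. -/
def del1 [Fintype S] [Fintype A] [Fintype B] (η γ : ℝ) (H : ℕ)
    (pol : ℕ → S → B → A → ℝ) (r : ℕ → S → A → B → ℝ)
    (P : ℕ → S → A → B → S → ℝ) (Qt : ℕ → S → B → ℝ) (h : ℕ) (s : S) (b : B) : ℝ :=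
  cumSB γ H pol (qr η γ H pol r P) P (bres η γ H pol r P Qt) h s b -
    ∑ b', qr η γ H pol r P h s b' *
      cumSB γ H pol (qr η γ H pol r P) P (bres η γ H pol r P Qt) h s b'

/-- Geometric sum `eff_H(x) = Σ_{i<H} x^i`. -/
def effH (H : ℕ) (x : ℝ) : ℝ := ∑ i ∈ Finset.range H, x ^ i

end QSE

open QSE

section ExpLemmas
lemma exp_quad_neg {y : ℝ} (hy : 0 ≤ y) : Real.exp (-y) ≤ 1 - y + y^2/2 := by
  have key : MonotoneOn (fun y : ℝ => 1 - y + y^2/2 - Real.exp (-y)) (Set.Ici 0) := by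
    apply monotoneOn_of_deriv_nonneg (convex_Ici 0)
    · fun_prop
    · fun_prop
    · intro x hx
      rw [interior_Ici] at hx
      have hd : HasDerivAt (fun y : ℝ => 1 - y + y^2/2 - Real.exp (-y))
          (-1 + x + Real.exp (-x)) x := by
        have h1 : HasDerivAt (fun y : ℝ => Real.exp (-y)) (-Real.exp (-x)) x := by
          simpa [Pi.add_def, Pi.sub_def, Pi.mul_def, Function.comp_def] using (Real.hasDerivAt_exp (-x)).comp x (hasDerivAt_neg x)
        have h2 : HasDerivAt (fun y : ℝ => 1 - y + y^2/2) (-1 + x) x := by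
          have := ((hasDerivAt_pow 2 x).div_const 2)
          have h3 := ((hasDerivAt_const x (1:ℝ)).sub (hasDerivAt_id x)).add this
          simpa [Pi.add_def, Pi.sub_def, Pi.mul_def, Function.comp_def] using h3.congr_deriv (by ring)
        simpa [Pi.add_def, Pi.sub_def, Pi.mul_def, Function.comp_def] using h2.sub h1
      rw [hd.deriv]
      have := Real.add_one_le_exp (-x)
      linarith
  have h0 := key (Set.self_mem_Ici) (Set.mem_Ici.2 hy) hy
  simp at h0
  linarith

lemma exp_quad_pos {x : ℝ} (hx : 0 ≤ x) : Real.exp x ≤ 1 + x + x^2/2 * Real.exp x := by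
  -- f(x) = 1 + x + (x²/2)e^x − e^x ≥ 0 on [0,∞)
  set f : ℝ → ℝ := fun x => 1 + x + x^2/2 * Real.exp x - Real.exp x with hf
  set f' : ℝ → ℝ := fun x => 1 + (x + x^2/2 - 1) * Real.exp x with hf'
  have hdf : ∀ x : ℝ, HasDerivAt f (f' x) x := by
    intro x
    have h1 : HasDerivAt (fun y : ℝ => y^2/2 * Real.exp y)
        (x * Real.exp x + x^2/2 * Real.exp x) x := by
      have := ((hasDerivAt_pow 2 x).div_const 2).mul (Real.hasDerivAt_exp x)
      simpa [Pi.add_def, Pi.sub_def, Pi.mul_def, Function.comp_def] using this.congr_deriv (by ring)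
    have h2 := (((hasDerivAt_const x (1:ℝ)).add (hasDerivAt_id x)).add h1).sub
      (Real.hasDerivAt_exp x)
    simpa [hf, hf', Pi.add_def, Pi.sub_def, Pi.mul_def] using h2.congr_deriv (show _ = 1 + (x + x^2/2 - 1) * Real.exp x by ring)
  have hf'nonneg : ∀ y : ℝ, 0 ≤ y → 0 ≤ f' y := by
    intro y hy
    have hdf' : ∀ z : ℝ, HasDerivAt f' ((2*z + z^2/2) * Real.exp z) z := by
      intro z
      have h1 : HasDerivAt (fun w : ℝ => w + w^2/2 - 1) (1 + z) z := by
        have := (hasDerivAt_id z).add ((hasDerivAt_pow 2 z).div_const 2)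
        simpa using (this.sub_const 1).congr_deriv (by ring)
      have := (hasDerivAt_const z (1:ℝ)).add (h1.mul (Real.hasDerivAt_exp z))
      simpa [hf', Pi.add_def, Pi.mul_def] using this.congr_deriv (show _ = (2*z + z^2/2) * Real.exp z by ring)
    have mono : MonotoneOn f' (Set.Ici 0) := by
      apply monotoneOn_of_deriv_nonneg (convex_Ici 0)
      · exact (HasDerivAt.continuousOn (fun z _ => hdf' z))
      · intro z hz; exact (hdf' z).differentiableAt.differentiableWithinAt
      · intro z hz
        rw [interior_Ici] at hz
        rw [(hdf' z).deriv]
        have hz' : (0:ℝ) < z := hz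
        have := Real.exp_pos z
        nlinarith
    have hm := mono Set.self_mem_Ici (Set.mem_Ici.2 hy) hy
    have h0 : f' 0 = 0 := by simp [hf']
    rw [h0] at hm
    exact hm
  have mono : MonotoneOn f (Set.Ici 0) := by
    apply monotoneOn_of_deriv_nonneg (convex_Ici 0)
    · exact (HasDerivAt.continuousOn (fun z _ => hdf z))
    · intro z hz; exact (hdf z).differentiableAt.differentiableWithinAt
    · intro z hz
      rw [interior_Ici] at hz
      rw [(hdf z).deriv]
      exact hf'nonneg z hz.le
  have hm := mono Set.self_mem_Ici (Set.mem_Ici.2 hx) hx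
  have h0 : f 0 = 0 := by simp [hf]
  rw [h0] at hm
  simp only [hf] at hm
  linarith

lemma exp_quad (x : ℝ) : Real.exp x ≤ 1 + x + x^2/2 * Real.exp |x| := by
  rcases le_or_gt 0 x with h | h
  · rw [abs_of_nonneg h]; exact exp_quad_pos h
  · rw [abs_of_neg h]
    have h1 : Real.exp x ≤ 1 + x + x^2/2 := by
      have := exp_quad_neg (y := -x) (by linarith)
      simpa using this.trans_eq (by ring)
    have h2 : (1:ℝ) ≤ Real.exp (-x) := Real.one_le_exp (by linarith)
    nlinarith [sq_nonneg x]

lemma abs_exp_sub_one (x : ℝ) : |Real.exp x - 1| ≤ |x| + x^2/2 * Real.exp |x| := by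
  rw [abs_le]
  constructor
  · have := Real.add_one_le_exp x
    have h2 : (0:ℝ) ≤ x^2/2 * Real.exp |x| := by positivity
    have := neg_abs_le x
    linarith
  · have := exp_quad x
    have := le_abs_self x
    linarith

end ExpLemmas

namespace QSEAux
open QSE
set_option linter.unusedSectionVars false
variable {S A B : Type} [Fintype S] [Fintype A] [Fintype B]

lemma softV_eq (η γ : ℝ) (H : ℕ) (pol : ℕ → S → B → A → ℝ) (r : ℕ → S → A → B → ℝ)
    (P : ℕ → S → A → B → S → ℝ) {h : ℕ} (hh : h < H) (s : S) :
    softV η γ H pol r P h s =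
      η⁻¹ * Real.log (∑ b, Real.exp (η * softQ η γ H pol r P h s b)) := by
  obtain ⟨n, hn⟩ : ∃ n, H - h = n + 1 := ⟨H - h - 1, by omega⟩
  have e1 : H - (n + 1) = h := by omega
  have e2 : H - (h + 1) = n := by omega
  rw [softV, hn]
  simp only [vAux, e1, softQ, softV, e2]

lemma sum_softmax_one [Nonempty B] {η : ℝ} (hη : η ≠ 0) (f : B → ℝ) :
    ∑ b, Real.exp (η * (f b - η⁻¹ * Real.log (∑ b', Real.exp (η * f b')))) = 1 := by
  have hT : 0 < ∑ b', Real.exp (η * f b') :=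
    Finset.sum_pos (fun b _ => Real.exp_pos _) Finset.univ_nonempty
  have : ∀ b : B, Real.exp (η * (f b - η⁻¹ * Real.log (∑ b', Real.exp (η * f b'))))
      = Real.exp (η * f b) / (∑ b', Real.exp (η * f b')) := by
    intro b
    rw [mul_sub, ← mul_assoc, mul_inv_cancel₀ hη, one_mul, Real.exp_sub, Real.exp_log hT]
  simp only [this]
  rw [← Finset.sum_div, div_self hT.ne']

lemma sum_qr_one [Nonempty B] {η : ℝ} (hη : η ≠ 0) (γ : ℝ) (H : ℕ)
    (pol : ℕ → S → B → A → ℝ) (r : ℕ → S → A → B → ℝ)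
    (P : ℕ → S → A → B → S → ℝ) {h : ℕ} (hh : h < H) (s : S) :
    ∑ b, qr η γ H pol r P h s b = 1 := by
  simp only [qr, softA, softV_eq η γ H pol r P hh]
  exact sum_softmax_one hη _

lemma sum_nuTil_one [Nonempty B] {η : ℝ} (hη : η ≠ 0) (H : ℕ)
    (Qt : ℕ → S → B → ℝ) {h : ℕ} (hh : h < H) (s : S) :
    ∑ b, nuTil η H Qt h s b = 1 := by
  simp only [nuTil, aTil, vTil, if_pos hh]
  exact sum_softmax_one hη _


/-- `W h s b = E_{s,b}[Σ γ^{l-h} bres_l]` -/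
def W (η γ : ℝ) (H : ℕ) (pol : ℕ → S → B → A → ℝ) (r : ℕ → S → A → B → ℝ)
    (P : ℕ → S → A → B → S → ℝ) (Qt : ℕ → S → B → ℝ) (h : ℕ) (s : S) (b : B) : ℝ :=
  cumSB γ H pol (qr η γ H pol r P) P (bres η γ H pol r P Qt) h s b

def dfun (η γ : ℝ) (H : ℕ) (pol : ℕ → S → B → A → ℝ) (r : ℕ → S → A → B → ℝ)
    (P : ℕ → S → A → B → S → ℝ) (Qt : ℕ → S → B → ℝ) (h : ℕ) (s : S) (b : B) : ℝ :=
  aTil η H Qt h s b - softA η γ H pol r P h s b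

def G (η γ : ℝ) (H : ℕ) (pol : ℕ → S → B → A → ℝ) (r : ℕ → S → A → B → ℝ)
    (P : ℕ → S → A → B → S → ℝ) (Qt : ℕ → S → B → ℝ) (h : ℕ) (s : S) : ℝ :=
  vTil η H Qt h s - softV η γ H pol r P h s -
    ∑ b, qr η γ H pol r P h s b * W η γ H pol r P Qt h s b

def gl (η γ : ℝ) (H : ℕ) (pol : ℕ → S → B → A → ℝ) (r : ℕ → S → A → B → ℝ)
    (P : ℕ → S → A → B → S → ℝ) (Qt : ℕ → S → B → ℝ) (h : ℕ) (s : S) : ℝ :=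
  - ∑ b, qr η γ H pol r P h s b * dfun η γ H pol r P Qt h s b

lemma cumSB_rec (γ : ℝ) (H : ℕ) (pol : ℕ → S → B → A → ℝ) (nu : ℕ → S → B → ℝ)
    (P : ℕ → S → A → B → S → ℝ) (X : ℕ → S → B → ℝ) {h : ℕ} (hh : h < H) (s : S) (b : B) :
    cumSB γ H pol nu P X h s b = X h s b +
      γ * ∑ a, pol h s b a * ∑ s', P h s a b s' *
        ∑ b', nu (h+1) s' b' * cumSB γ H pol nu P X (h+1) s' b' := by
  obtain ⟨n, hn⟩ : ∃ n, H - h = n + 1 := ⟨H - h - 1, by omega⟩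
  have e1 : H - (n + 1) = h := by omega
  have e2 : H - (h + 1) = n := by omega
  have e3 : H - n = h + 1 := by omega
  rw [cumSB, hn]
  simp only [cumAux, e1, e3, cumSB, e2]

lemma cumSB_top (γ : ℝ) (H : ℕ) (pol : ℕ → S → B → A → ℝ) (nu : ℕ → S → B → ℝ)
    (P : ℕ → S → A → B → S → ℝ) (X : ℕ → S → B → ℝ) (s : S) (b : B) :
    cumSB γ H pol nu P X H s b = 0 := by
  simp [cumSB, Nat.sub_self, cumAux]

lemma swap_as (pol : ℕ → S → B → A → ℝ) (P : ℕ → S → A → B → S → ℝ)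
    (h : ℕ) (s : S) (b : B) (F : S → ℝ) :
    ∑ a, pol h s b a * ∑ s', P h s a b s' * F s' =
      ∑ s', pPol pol P h s b s' * F s' := by
  simp only [Finset.mul_sum, pPol, Finset.sum_mul]
  rw [Finset.sum_comm]
  congr 1; ext s'; congr 1; ext a; ring

lemma vTil_top (η : ℝ) (H : ℕ) (Qt : ℕ → S → B → ℝ) (s : S) :
    vTil η H Qt H s = 0 := by simp [vTil]

lemma softV_top (η γ : ℝ) (H : ℕ) (pol : ℕ → S → B → A → ℝ) (r : ℕ → S → A → B → ℝ)
    (P : ℕ → S → A → B → S → ℝ) (s : S) :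
    softV η γ H pol r P H s = 0 := by simp [softV, Nat.sub_self, vAux]

lemma G_top (η γ : ℝ) (H : ℕ) (pol : ℕ → S → B → A → ℝ) (r : ℕ → S → A → B → ℝ)
    (P : ℕ → S → A → B → S → ℝ) (Qt : ℕ → S → B → ℝ) (s : S) :
    G η γ H pol r P Qt H s = 0 := by
  simp [G, vTil_top, softV_top, W, cumSB_top]

lemma W_eq (η γ : ℝ) (H : ℕ) (pol : ℕ → S → B → A → ℝ) (r : ℕ → S → A → B → ℝ)
    (P : ℕ → S → A → B → S → ℝ) (Qt : ℕ → S → B → ℝ) {h : ℕ} (hh : h < H) (s : S) (b : B) :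
    W η γ H pol r P Qt h s b = (Qt h s b - softQ η γ H pol r P h s b) -
      γ * ∑ s', pPol pol P h s b s' * G η γ H pol r P Qt (h+1) s' := by
  unfold W
  rw [cumSB_rec γ H pol _ P _ hh, swap_as]
  have : ∀ s' : S, ∑ b', qr η γ H pol r P (h+1) s' b' *
      cumSB γ H pol (qr η γ H pol r P) P (bres η γ H pol r P Qt) (h+1) s' b' =
      vTil η H Qt (h+1) s' - softV η γ H pol r P (h+1) s' - G η γ H pol r P Qt (h+1) s' := by
    intro s'; unfold G W; ring
  simp only [this]
  simp only [bres, softQ, mul_sub, Finset.sum_sub_distrib]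
  ring

lemma d_eq (η γ : ℝ) (H : ℕ) (pol : ℕ → S → B → A → ℝ) (r : ℕ → S → A → B → ℝ)
    (P : ℕ → S → A → B → S → ℝ) (Qt : ℕ → S → B → ℝ) {h : ℕ} (hh : h < H) (s : S) (b : B) :
    dfun η γ H pol r P Qt h s b = del1 η γ H pol r P Qt h s b - G η γ H pol r P Qt h s +
      γ * ∑ s', pPol pol P h s b s' * G η γ H pol r P Qt (h+1) s' := by
  have hW := W_eq η γ H pol r P Qt hh s b
  have hdel : del1 η γ H pol r P Qt h s b = W η γ H pol r P Qt h s b -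
      ∑ b', qr η γ H pol r P h s b' * W η γ H pol r P Qt h s b' := rfl
  have hG : G η γ H pol r P Qt h s = vTil η H Qt h s - softV η γ H pol r P h s -
      ∑ b', qr η γ H pol r P h s b' * W η γ H pol r P Qt h s b' := rfl
  rw [hdel, hG, hW]
  simp only [dfun, aTil, softA]
  ring

lemma G_rec (η γ : ℝ) (H : ℕ) (pol : ℕ → S → B → A → ℝ) (r : ℕ → S → A → B → ℝ)
    (P : ℕ → S → A → B → S → ℝ) (Qt : ℕ → S → B → ℝ) {h : ℕ} (hh : h < H) (s : S)
    (hsum : ∑ b, qr η γ H pol r P h s b = 1) :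
    G η γ H pol r P Qt h s = gl η γ H pol r P Qt h s +
      γ * ∑ b, qr η γ H pol r P h s b *
        ∑ s', pPol pol P h s b s' * G η γ H pol r P Qt (h+1) s' := by
  have hW : ∀ b : B, W η γ H pol r P Qt h s b = (Qt h s b - softQ η γ H pol r P h s b) -
      γ * ∑ s', pPol pol P h s b s' * G η γ H pol r P Qt (h+1) s' :=
    fun b => W_eq η γ H pol r P Qt hh s b
  have e0 : ∑ b, qr η γ H pol r P h s b * W η γ H pol r P Qt h s b =
      ∑ b, qr η γ H pol r P h s b * (Qt h s b - softQ η γ H pol r P h s b) -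
      γ * ∑ b, qr η γ H pol r P h s b *
        ∑ s', pPol pol P h s b s' * G η γ H pol r P Qt (h+1) s' := by
    simp only [hW]
    have : ∀ b : B, qr η γ H pol r P h s b * ((Qt h s b - softQ η γ H pol r P h s b) -
        γ * ∑ s', pPol pol P h s b s' * G η γ H pol r P Qt (h+1) s') =
        qr η γ H pol r P h s b * (Qt h s b - softQ η γ H pol r P h s b) -
        γ * (qr η γ H pol r P h s b *
          ∑ s', pPol pol P h s b s' * G η γ H pol r P Qt (h+1) s') := fun b => by ring
    simp only [this, Finset.sum_sub_distrib, ← Finset.mul_sum]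
  have e1 : ∑ b, qr η γ H pol r P h s b * dfun η γ H pol r P Qt h s b =
      ∑ b, qr η γ H pol r P h s b * (Qt h s b - softQ η γ H pol r P h s b) -
      (vTil η H Qt h s - softV η γ H pol r P h s) := by
    have : ∀ b : B, qr η γ H pol r P h s b * dfun η γ H pol r P Qt h s b =
        qr η γ H pol r P h s b * (Qt h s b - softQ η γ H pol r P h s b) -
        qr η γ H pol r P h s b * (vTil η H Qt h s - softV η γ H pol r P h s) := by
      intro b; simp only [dfun, aTil, softA]; ring
    simp only [this, Finset.sum_sub_distrib, ← Finset.sum_mul, hsum, one_mul]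
  have hGd : G η γ H pol r P Qt h s = vTil η H Qt h s - softV η γ H pol r P h s -
      ∑ b, qr η γ H pol r P h s b * W η γ H pol r P Qt h s b := rfl
  have hgld : gl η γ H pol r P Qt h s =
      - ∑ b, qr η γ H pol r P h s b * dfun η γ H pol r P Qt h s b := rfl
  rw [hGd, hgld, e0]
  linarith [e1]

lemma qr_nonneg (η γ : ℝ) (H : ℕ) (pol : ℕ → S → B → A → ℝ) (r : ℕ → S → A → B → ℝ)
    (P : ℕ → S → A → B → S → ℝ) (h : ℕ) (s : S) (b : B) :
    0 ≤ qr η γ H pol r P h s b := (Real.exp_pos _).le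

lemma gl_nonneg [Nonempty B] {η : ℝ} (hη : 0 < η) (γ : ℝ) (H : ℕ)
    (pol : ℕ → S → B → A → ℝ) (r : ℕ → S → A → B → ℝ)
    (P : ℕ → S → A → B → S → ℝ) (Qt : ℕ → S → B → ℝ) {h : ℕ} (hh : h < H) (s : S)
    (hsq : ∑ b, qr η γ H pol r P h s b = 1)
    (hsn : ∑ b, nuTil η H Qt h s b = 1) :
    0 ≤ gl η γ H pol r P Qt h s := by
  have key : ∀ b : B, nuTil η H Qt h s b =
      qr η γ H pol r P h s b * Real.exp (η * dfun η γ H pol r P Qt h s b) := by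
    intro b
    rw [nuTil, qr, ← Real.exp_add, ← mul_add, dfun]
    ring_nf
  have hle : ∑ b, qr η γ H pol r P h s b * (1 + η * dfun η γ H pol r P Qt h s b) ≤
      ∑ b, nuTil η H Qt h s b := by
    apply Finset.sum_le_sum
    intro b _
    rw [key b]
    have h1 : 1 + η * dfun η γ H pol r P Qt h s b ≤
        Real.exp (η * dfun η γ H pol r P Qt h s b) := by
      have := Real.add_one_le_exp (η * dfun η γ H pol r P Qt h s b); linarith
    exact mul_le_mul_of_nonneg_left h1 (qr_nonneg _ _ _ _ _ _ _ _ _)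
  rw [hsn] at hle
  have expand : ∑ b, qr η γ H pol r P h s b * (1 + η * dfun η γ H pol r P Qt h s b) =
      1 + η * ∑ b, qr η γ H pol r P h s b * dfun η γ H pol r P Qt h s b := by
    have : ∀ b : B, qr η γ H pol r P h s b * (1 + η * dfun η γ H pol r P Qt h s b) =
        qr η γ H pol r P h s b + η * (qr η γ H pol r P h s b *
          dfun η γ H pol r P Qt h s b) := fun b => by ring
    simp only [this, Finset.sum_add_distrib, ← Finset.mul_sum, hsq]
  rw [expand] at hle
  unfold gl
  nlinarith

lemma exp_quad_stub (x : ℝ) : Real.exp x ≤ 1 + x + x^2/2 * Real.exp |x| := exp_quad x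

lemma gl_le [Nonempty B] {η : ℝ} (hη : 0 < η) (γ : ℝ) (H : ℕ)
    (pol : ℕ → S → B → A → ℝ) (r : ℕ → S → A → B → ℝ)
    (P : ℕ → S → A → B → S → ℝ) (Qt : ℕ → S → B → ℝ) {h : ℕ} (hh : h < H) (s : S)
    {BA : ℝ} (hd : ∀ b, |dfun η γ H pol r P Qt h s b| ≤ 2 * BA)
    (hsq : ∑ b, qr η γ H pol r P h s b = 1)
    (hsn : ∑ b, nuTil η H Qt h s b = 1) :
    gl η γ H pol r P Qt h s ≤ η / 2 * Real.exp (2 * η * BA) *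
      ∑ b, qr η γ H pol r P h s b * (dfun η γ H pol r P Qt h s b)^2 := by
  have key : ∀ b : B, nuTil η H Qt h s b =
      qr η γ H pol r P h s b * Real.exp (η * dfun η γ H pol r P Qt h s b) := by
    intro b
    rw [nuTil, qr, ← Real.exp_add, ← mul_add, dfun]
    ring_nf
  have hle : ∑ b, nuTil η H Qt h s b ≤
      ∑ b, qr η γ H pol r P h s b * (1 + η * dfun η γ H pol r P Qt h s b +
        η^2 * (dfun η γ H pol r P Qt h s b)^2 / 2 * Real.exp (2 * η * BA)) := by
    apply Finset.sum_le_sum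
    intro b _
    rw [key b]
    apply mul_le_mul_of_nonneg_left _ (qr_nonneg _ _ _ _ _ _ _ _ _)
    have h1 := exp_quad_stub (η * dfun η γ H pol r P Qt h s b)
    have h2 : Real.exp |η * dfun η γ H pol r P Qt h s b| ≤ Real.exp (2 * η * BA) := by
      apply Real.exp_le_exp.2
      rw [abs_mul, abs_of_pos hη]
      calc η * |dfun η γ H pol r P Qt h s b| ≤ η * (2 * BA) :=
            mul_le_mul_of_nonneg_left (hd b) hη.le
        _ = 2 * η * BA := by ring
    have h3 : (0:ℝ) ≤ (η * dfun η γ H pol r P Qt h s b)^2 / 2 := by positivity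
    nlinarith [sq_nonneg (η * dfun η γ H pol r P Qt h s b)]
  rw [hsn] at hle
  have expand : ∑ b, qr η γ H pol r P h s b * (1 + η * dfun η γ H pol r P Qt h s b +
        η^2 * (dfun η γ H pol r P Qt h s b)^2 / 2 * Real.exp (2 * η * BA)) =
      1 + η * ∑ b, qr η γ H pol r P h s b * dfun η γ H pol r P Qt h s b +
      η^2 / 2 * Real.exp (2 * η * BA) *
        ∑ b, qr η γ H pol r P h s b * (dfun η γ H pol r P Qt h s b)^2 := by
    have : ∀ b : B, qr η γ H pol r P h s b * (1 + η * dfun η γ H pol r P Qt h s b +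
        η^2 * (dfun η γ H pol r P Qt h s b)^2 / 2 * Real.exp (2 * η * BA)) =
        qr η γ H pol r P h s b + η * (qr η γ H pol r P h s b *
          dfun η γ H pol r P Qt h s b) + η^2 / 2 * Real.exp (2 * η * BA) *
          (qr η γ H pol r P h s b * (dfun η γ H pol r P Qt h s b)^2) := fun b => by ring
    simp only [this, Finset.sum_add_distrib, ← Finset.mul_sum, hsq]
  rw [expand] at hle
  have hgld : gl η γ H pol r P Qt h s =
      - ∑ b, qr η γ H pol r P h s b * dfun η γ H pol r P Qt h s b := rfl
  rw [hgld]
  nlinarith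

lemma pPol_nonneg (pol : ℕ → S → B → A → ℝ) (P : ℕ → S → A → B → S → ℝ)
    {H h : ℕ} (hh : h < H)
    (hpol0 : ∀ h < H, ∀ s b a, 0 ≤ pol h s b a)
    (hP0 : ∀ h < H, ∀ s a b s', 0 ≤ P h s a b s') (s : S) (b : B) (s' : S) :
    0 ≤ pPol pol P h s b s' :=
  Finset.sum_nonneg fun a _ => mul_nonneg (hpol0 h hh s b a) (hP0 h hh s a b s')

lemma G_nonneg [Nonempty B] {η : ℝ} (hη : 0 < η) {γ : ℝ} (hγ0 : 0 ≤ γ) (H : ℕ)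
    (pol : ℕ → S → B → A → ℝ) (r : ℕ → S → A → B → ℝ)
    (P : ℕ → S → A → B → S → ℝ) (Qt : ℕ → S → B → ℝ)
    (hpol0 : ∀ h < H, ∀ s b a, 0 ≤ pol h s b a)
    (hP0 : ∀ h < H, ∀ s a b s', 0 ≤ P h s a b s') :
    ∀ k h, h + k = H → ∀ s, 0 ≤ G η γ H pol r P Qt h s := by
  intro k
  induction k with
  | zero =>
    intro h hk s
    have : h = H := by omega
    rw [this, G_top]
  | succ k ih =>
    intro h hk s
    have hh : h < H := by omega
    rw [G_rec η γ H pol r P Qt hh s (sum_qr_one hη.ne' γ H pol r P hh s)]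
    apply add_nonneg
    · exact gl_nonneg hη γ H pol r P Qt hh s (sum_qr_one hη.ne' γ H pol r P hh s)
        (sum_nuTil_one hη.ne' H Qt hh s)
    · apply mul_nonneg hγ0
      apply Finset.sum_nonneg
      intro b _
      apply mul_nonneg (qr_nonneg _ _ _ _ _ _ _ _ _)
      apply Finset.sum_nonneg
      intro s' _
      exact mul_nonneg (pPol_nonneg pol P hh hpol0 hP0 s b s') (ih (h+1) (by omega) s')

lemma margS_nonneg (H : ℕ) (rho0 : S → ℝ) (hrho0 : ∀ s, 0 ≤ rho0 s)
    (pol : ℕ → S → B → A → ℝ) (nu : ℕ → S → B → ℝ) (P : ℕ → S → A → B → S → ℝ)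
    (hnu : ∀ h s b, 0 ≤ nu h s b)
    (hpol0 : ∀ h < H, ∀ s b a, 0 ≤ pol h s b a)
    (hP0 : ∀ h < H, ∀ s a b s', 0 ≤ P h s a b s') :
    ∀ h, h ≤ H → ∀ s, 0 ≤ margS rho0 pol nu P h s := by
  intro h
  induction h with
  | zero => intro _ s; exact hrho0 s
  | succ h ih =>
    intro hle s'
    have hh : h < H := by omega
    rw [margS]
    apply Finset.sum_nonneg; intro s _
    apply Finset.sum_nonneg; intro b _
    apply Finset.sum_nonneg; intro a _
    exact mul_nonneg (mul_nonneg (mul_nonneg (ih (by omega) s) (hnu h s b))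
      (hpol0 h hh s b a)) (hP0 h hh s a b s')

lemma push (rho0 : S → ℝ) (pol : ℕ → S → B → A → ℝ) (nu : ℕ → S → B → ℝ)
    (P : ℕ → S → A → B → S → ℝ) (h : ℕ) (F : S → ℝ) :
    ∑ s, margS rho0 pol nu P h s * ∑ b, nu h s b *
        ∑ s', pPol pol P h s b s' * F s' =
      ∑ s', margS rho0 pol nu P (h+1) s' * F s' := by
  simp only [margS]
  simp only [pPol, Finset.mul_sum, Finset.sum_mul]
  rw [Finset.sum_comm]
  conv_rhs => rw [Finset.sum_comm]
  conv_rhs => enter [2, s]; rw [Finset.sum_comm]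
  conv_rhs => rw [Finset.sum_comm]
  apply Finset.sum_congr rfl; intro b _
  apply Finset.sum_congr rfl; intro s _
  apply Finset.sum_congr rfl; intro s' _
  apply Finset.sum_congr rfl; intro a _
  ring

lemma G_marg [Nonempty B] {η : ℝ} (hη : 0 < η) (γ : ℝ) (H : ℕ) (rho0 : S → ℝ)
    (pol : ℕ → S → B → A → ℝ) (r : ℕ → S → A → B → ℝ)
    (P : ℕ → S → A → B → S → ℝ) (Qt : ℕ → S → B → ℝ) :
    ∀ k h, h + k = H →
      ∑ s, margS rho0 pol (qr η γ H pol r P) P h s * G η γ H pol r P Qt h s =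
      ∑ l ∈ Finset.Ico h H, γ^(l-h) *
        ∑ s, margS rho0 pol (qr η γ H pol r P) P l s * gl η γ H pol r P Qt l s := by
  intro k
  induction k with
  | zero =>
    intro h hk
    have hH : h = H := by omega
    subst hH
    simp [G_top]
  | succ k ih =>
    intro h hk
    have hh : h < H := by omega
    have hrec : ∀ s, margS rho0 pol (qr η γ H pol r P) P h s * G η γ H pol r P Qt h s =
        margS rho0 pol (qr η γ H pol r P) P h s * gl η γ H pol r P Qt h s +
        γ * (margS rho0 pol (qr η γ H pol r P) P h s *
          ∑ b, qr η γ H pol r P h s b *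
            ∑ s', pPol pol P h s b s' * G η γ H pol r P Qt (h+1) s') := by
      intro s
      rw [G_rec η γ H pol r P Qt hh s (sum_qr_one hη.ne' γ H pol r P hh s)]
      ring
    simp only [hrec, Finset.sum_add_distrib, ← Finset.mul_sum]
    rw [push rho0 pol (qr η γ H pol r P) P h (G η γ H pol r P Qt (h+1))]
    rw [ih (h+1) (by omega)]
    rw [Finset.sum_eq_sum_Ico_succ_bot hh]
    simp only [Nat.sub_self, pow_zero, one_mul, Finset.mul_sum]
    congr 1
    apply Finset.sum_congr rfl
    intro l hl
    have hl1 : h + 1 ≤ l := (Finset.mem_Ico.1 hl).1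
    have : l - h = (l - (h+1)) + 1 := by omega
    rw [this, pow_succ]
    apply Finset.sum_congr rfl
    intro x _
    ring

lemma sum_G_le [Nonempty B] {η : ℝ} (hη : 0 < η) {γ : ℝ} (hγ0 : 0 ≤ γ) (H : ℕ)
    (rho0 : S → ℝ) (pol : ℕ → S → B → A → ℝ) (r : ℕ → S → A → B → ℝ)
    (P : ℕ → S → A → B → S → ℝ) (Qt : ℕ → S → B → ℝ)
    (hg : ∀ l < H, 0 ≤ ∑ s, margS rho0 pol (qr η γ H pol r P) P l s *
      gl η γ H pol r P Qt l s) :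
    ∑ h ∈ Finset.range H,
        ∑ s, margS rho0 pol (qr η γ H pol r P) P h s * G η γ H pol r P Qt h s ≤
      effH H γ * ∑ l ∈ Finset.range H,
        ∑ s, margS rho0 pol (qr η γ H pol r P) P l s * gl η γ H pol r P Qt l s := by
  have step : ∀ h ∈ Finset.range H,
      ∑ s, margS rho0 pol (qr η γ H pol r P) P h s * G η γ H pol r P Qt h s =
      ∑ l ∈ Finset.Ico h H, γ^(l-h) *
        ∑ s, margS rho0 pol (qr η γ H pol r P) P l s * gl η γ H pol r P Qt l s := by
    intro h hmem
    exact G_marg hη γ H rho0 pol r P Qt (H - h) h (by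
      have := Finset.mem_range.1 hmem; omega)
  rw [Finset.sum_congr rfl step]
  rw [← Nat.Ico_zero_eq_range, Finset.sum_Ico_Ico_comm]
  rw [Finset.mul_sum]
  apply Finset.sum_le_sum
  intro l hl
  have hlH : l < H := (Finset.mem_Ico.1 hl).2
  rw [← Finset.sum_mul]
  apply mul_le_mul_of_nonneg_right _ (hg l hlH)
  have e : ∑ i ∈ Finset.Ico 0 (l+1), γ^(l-i) = ∑ i ∈ Finset.range (l+1), γ^i := by
    rw [Nat.Ico_zero_eq_range, ← Finset.sum_range_reflect]
    apply Finset.sum_congr rfl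
    intro i hi
    congr 1
    have := Finset.mem_range.1 hi
    omega
  rw [e, effH]
  apply Finset.sum_le_sum_of_subset_of_nonneg
  · exact Finset.range_subset_range.2 (by omega)
  · intro i _ _; positivity

lemma abs_exp_sub_one_stub (x : ℝ) : |Real.exp x - 1| ≤ |x| + x^2/2 * Real.exp |x| :=
  abs_exp_sub_one x

lemma per_hs [Nonempty B] {η : ℝ} (hη : 0 < η) {γ : ℝ} (hγ0 : 0 ≤ γ) (H : ℕ)
    (pol : ℕ → S → B → A → ℝ) (r : ℕ → S → A → B → ℝ)
    (P : ℕ → S → A → B → S → ℝ) (Qt : ℕ → S → B → ℝ)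
    (hpol0 : ∀ h < H, ∀ s b a, 0 ≤ pol h s b a)
    (hP0 : ∀ h < H, ∀ s a b s', 0 ≤ P h s a b s')
    {h : ℕ} (hh : h < H) (s : S) {BA : ℝ}
    (hd : ∀ b, |dfun η γ H pol r P Qt h s b| ≤ 2 * BA)
    (hGpos : 0 ≤ G η γ H pol r P Qt h s)
    (hGpos' : ∀ s', 0 ≤ G η γ H pol r P Qt (h+1) s') :
    ∑ b, |nuTil η H Qt h s b - qr η γ H pol r P h s b| ≤
      η * ∑ b, qr η γ H pol r P h s b * |del1 η γ H pol r P Qt h s b| +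
      2 * η * G η γ H pol r P Qt h s +
      η^2/2 * Real.exp (2 * η * BA) *
        ∑ b, qr η γ H pol r P h s b * (dfun η γ H pol r P Qt h s b)^2 := by
  have hsq := sum_qr_one hη.ne' γ H pol r P hh s
  have hsn := sum_nuTil_one hη.ne' H Qt hh s
  set C := Real.exp (2 * η * BA) with hC
  have key : ∀ b : B, nuTil η H Qt h s b =
      qr η γ H pol r P h s b * Real.exp (η * dfun η γ H pol r P Qt h s b) := by
    intro b
    rw [nuTil, qr, ← Real.exp_add, ← mul_add, dfun]
    ring_nf
  -- step 2
  have s2 : ∑ b, |nuTil η H Qt h s b - qr η γ H pol r P h s b| ≤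
      η * ∑ b, qr η γ H pol r P h s b * |dfun η γ H pol r P Qt h s b| +
      η^2/2 * C * ∑ b, qr η γ H pol r P h s b * (dfun η γ H pol r P Qt h s b)^2 := by
    have s1 : ∀ b : B, |nuTil η H Qt h s b - qr η γ H pol r P h s b| ≤
        η * (qr η γ H pol r P h s b * |dfun η γ H pol r P Qt h s b|) +
        η^2/2 * C * (qr η γ H pol r P h s b * (dfun η γ H pol r P Qt h s b)^2) := by
      intro b
      rw [key b, show qr η γ H pol r P h s b *
          Real.exp (η * dfun η γ H pol r P Qt h s b) - qr η γ H pol r P h s b =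
          qr η γ H pol r P h s b *
          (Real.exp (η * dfun η γ H pol r P Qt h s b) - 1) from by ring]
      rw [abs_mul, abs_of_nonneg (qr_nonneg _ _ _ _ _ _ _ _ _)]
      have h1 := abs_exp_sub_one_stub (η * dfun η γ H pol r P Qt h s b)
      have h2 : Real.exp |η * dfun η γ H pol r P Qt h s b| ≤ C := by
        rw [hC]
        apply Real.exp_le_exp.2
        rw [abs_mul, abs_of_pos hη]
        calc η * |dfun η γ H pol r P Qt h s b| ≤ η * (2 * BA) :=
              mul_le_mul_of_nonneg_left (hd b) hη.le
          _ = 2 * η * BA := by ring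
      have h3 : |Real.exp (η * dfun η γ H pol r P Qt h s b) - 1| ≤
          η * |dfun η γ H pol r P Qt h s b| +
          η^2/2 * C * (dfun η γ H pol r P Qt h s b)^2 := by
        have e1 : |η * dfun η γ H pol r P Qt h s b| = η * |dfun η γ H pol r P Qt h s b| := by
          rw [abs_mul, abs_of_pos hη]
        have e2 : (η * dfun η γ H pol r P Qt h s b)^2 =
            η^2 * (dfun η γ H pol r P Qt h s b)^2 := by ring
        rw [e1, e2] at h1
        rw [e1] at h2
        have h4 : (0:ℝ) ≤ η^2 * (dfun η γ H pol r P Qt h s b)^2 / 2 := by positivity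
        nlinarith [h2, h4]
      have hq := qr_nonneg η γ H pol r P h s b
      calc qr η γ H pol r P h s b * |Real.exp (η * dfun η γ H pol r P Qt h s b) - 1| ≤
          qr η γ H pol r P h s b * (η * |dfun η γ H pol r P Qt h s b| +
            η^2/2 * C * (dfun η γ H pol r P Qt h s b)^2) :=
            mul_le_mul_of_nonneg_left h3 hq
        _ = η * (qr η γ H pol r P h s b * |dfun η γ H pol r P Qt h s b|) +
            η^2/2 * C * (qr η γ H pol r P h s b * (dfun η γ H pol r P Qt h s b)^2) := by
            ring
    calc ∑ b, |nuTil η H Qt h s b - qr η γ H pol r P h s b| ≤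
        ∑ b, (η * (qr η γ H pol r P h s b * |dfun η γ H pol r P Qt h s b|) +
          η^2/2 * C * (qr η γ H pol r P h s b * (dfun η γ H pol r P Qt h s b)^2)) :=
          Finset.sum_le_sum fun b _ => s1 b
      _ = η * ∑ b, qr η γ H pol r P h s b * |dfun η γ H pol r P Qt h s b| +
          η^2/2 * C * ∑ b, qr η γ H pol r P h s b * (dfun η γ H pol r P Qt h s b)^2 := by
          rw [Finset.sum_add_distrib, ← Finset.mul_sum, ← Finset.mul_sum]
  -- step 3
  have s3 : ∑ b, qr η γ H pol r P h s b * |dfun η γ H pol r P Qt h s b| ≤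
      ∑ b, qr η γ H pol r P h s b * |del1 η γ H pol r P Qt h s b| +
      2 * G η γ H pol r P Qt h s := by
    have habs : ∀ b : B, |dfun η γ H pol r P Qt h s b| ≤
        |del1 η γ H pol r P Qt h s b| +
        (γ * ∑ s', pPol pol P h s b s' * G η γ H pol r P Qt (h+1) s' +
          G η γ H pol r P Qt h s) := by
      intro b
      rw [d_eq η γ H pol r P Qt hh s b]
      have t1 : 0 ≤ γ * ∑ s', pPol pol P h s b s' * G η γ H pol r P Qt (h+1) s' :=
        mul_nonneg hγ0 (Finset.sum_nonneg fun s' _ =>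
          mul_nonneg (pPol_nonneg pol P hh hpol0 hP0 s b s') (hGpos' s'))
      rw [show del1 η γ H pol r P Qt h s b - G η γ H pol r P Qt h s +
          γ * ∑ s', pPol pol P h s b s' * G η γ H pol r P Qt (h+1) s' =
          del1 η γ H pol r P Qt h s b +
          (γ * (∑ s', pPol pol P h s b s' * G η γ H pol r P Qt (h+1) s') -
            G η γ H pol r P Qt h s) from by ring]
      refine (abs_add_le _ _).trans ?_
      have : |γ * (∑ s', pPol pol P h s b s' * G η γ H pol r P Qt (h+1) s') -
          G η γ H pol r P Qt h s| ≤
          γ * ∑ s', pPol pol P h s b s' * G η γ H pol r P Qt (h+1) s' +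
          G η γ H pol r P Qt h s := by
        rw [abs_le]
        constructor
        · linarith [t1, hGpos]
        · linarith [t1, hGpos]
      linarith [this]
    have hGrec := G_rec η γ H pol r P Qt hh s hsq
    have hgl := gl_nonneg hη γ H pol r P Qt hh s hsq hsn
    calc ∑ b, qr η γ H pol r P h s b * |dfun η γ H pol r P Qt h s b| ≤
        ∑ b, qr η γ H pol r P h s b * (|del1 η γ H pol r P Qt h s b| +
          (γ * ∑ s', pPol pol P h s b s' * G η γ H pol r P Qt (h+1) s' +
            G η γ H pol r P Qt h s)) :=
          Finset.sum_le_sum fun b _ => mul_le_mul_of_nonneg_left (habs b)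
            (qr_nonneg _ _ _ _ _ _ _ _ _)
      _ = ∑ b, qr η γ H pol r P h s b * |del1 η γ H pol r P Qt h s b| +
          γ * (∑ b, qr η γ H pol r P h s b *
            ∑ s', pPol pol P h s b s' * G η γ H pol r P Qt (h+1) s') +
          G η γ H pol r P Qt h s := by
          have : ∀ b : B, qr η γ H pol r P h s b * (|del1 η γ H pol r P Qt h s b| +
              (γ * ∑ s', pPol pol P h s b s' * G η γ H pol r P Qt (h+1) s' +
                G η γ H pol r P Qt h s)) =
              qr η γ H pol r P h s b * |del1 η γ H pol r P Qt h s b| +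
              γ * (qr η γ H pol r P h s b *
                ∑ s', pPol pol P h s b s' * G η γ H pol r P Qt (h+1) s') +
              qr η γ H pol r P h s b * G η γ H pol r P Qt h s := fun b => by ring
          simp only [this, Finset.sum_add_distrib, ← Finset.mul_sum, ← Finset.sum_mul, hsq,
            one_mul]
      _ ≤ ∑ b, qr η γ H pol r P h s b * |del1 η γ H pol r P Qt h s b| +
          2 * G η γ H pol r P Qt h s := by
          have : γ * (∑ b, qr η γ H pol r P h s b *
              ∑ s', pPol pol P h s b s' * G η γ H pol r P Qt (h+1) s') =
              G η γ H pol r P Qt h s - gl η γ H pol r P Qt h s := by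
            linarith [hGrec]
          rw [this]
          linarith [hgl]
  calc ∑ b, |nuTil η H Qt h s b - qr η γ H pol r P h s b| ≤
      η * ∑ b, qr η γ H pol r P h s b * |dfun η γ H pol r P Qt h s b| +
      η^2/2 * C * ∑ b, qr η γ H pol r P h s b * (dfun η γ H pol r P Qt h s b)^2 := s2
    _ ≤ η * (∑ b, qr η γ H pol r P h s b * |del1 η γ H pol r P Qt h s b| +
        2 * G η γ H pol r P Qt h s) +
        η^2/2 * C * ∑ b, qr η γ H pol r P h s b * (dfun η γ H pol r P Qt h s b)^2 := by
        have := mul_le_mul_of_nonneg_left s3 hη.le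
        linarith
    _ = η * ∑ b, qr η γ H pol r P h s b * |del1 η γ H pol r P Qt h s b| +
        2 * η * G η γ H pol r P Qt h s +
        η^2/2 * C * ∑ b, qr η γ H pol r P h s b * (dfun η γ H pol r P Qt h s b)^2 := by
        ring
end QSEAux

open QSEAux


/-- Response model error, myopic-form bound (steps 0-based: `h < H` corresponds to
`h+1 ∈ [H]` of the paper).  With `ν = ν^π` the quantal response of `π` and
`ν̃` the quantal response derived from the estimates `Q̃`:
`Σ_h H·E^{π,ν}[‖(ν̃_h − ν_h)(·|s_h)‖₁] ≤ C⁽⁰⁾ Σ_h E^{π,ν}[|Δ̃_h⁽¹⁾(s_h,b_h)|]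
+ C⁽¹⁾ Σ_h E^{π,ν}[(Ã_h(s_h,b_h) − A_h^π(s_h,b_h))²]`,
where `C⁽⁰⁾ = 2ηH` and `C⁽¹⁾ = η²H(1 + 4 eff_H(γ)) exp(2ηB_A)`. -/
theorem response_model_error_myopic_form
    {S A B : Type} [Fintype S] [Fintype A] [Fintype B]
    [Nonempty S] [Nonempty A] [Nonempty B]
    (H : ℕ) (hH : 1 ≤ H) (η γ : ℝ) (hη : 0 < η) (hγ0 : 0 ≤ γ) (hγ1 : γ ≤ 1)
    (rho0 : S → ℝ) (hrho0 : ∀ s, 0 ≤ rho0 s) (hrho1 : ∑ s, rho0 s = 1)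
    (P : ℕ → S → A → B → S → ℝ)
    (hP0 : ∀ h < H, ∀ s a b s', 0 ≤ P h s a b s')
    (hP1 : ∀ h < H, ∀ s a b, ∑ s', P h s a b s' = 1)
    (r : ℕ → S → A → B → ℝ) (hr : ∀ h < H, ∀ s a b, r h s a b ∈ Set.Icc (0 : ℝ) 1)
    (pol : ℕ → S → B → A → ℝ)
    (hpol0 : ∀ h < H, ∀ s b a, 0 ≤ pol h s b a)
    (hpol1 : ∀ h < H, ∀ s b, ∑ a, pol h s b a = 1)
    -- the estimated action values Q̃_h
    (Qt : ℕ → S → B → ℝ)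
    -- B_A bounds both the true and the estimated advantage functions
    (BA : ℝ) (hBA : 0 < BA)
    (hA : ∀ h < H, ∀ s b, |softA η γ H pol r P h s b| ≤ BA)
    (hAt : ∀ h < H, ∀ s b, |aTil η H Qt h s b| ≤ BA) :
    ∑ h ∈ Finset.range H, (H : ℝ) * ∑ s,
        margS rho0 pol (qr η γ H pol r P) P h s *
          ∑ b, |nuTil η H Qt h s b - qr η γ H pol r P h s b| ≤
      (2 * η * (H : ℝ)) *
        ∑ h ∈ Finset.range H, ∑ s, ∑ b,
          margS rho0 pol (qr η γ H pol r P) P h s * qr η γ H pol r P h s b *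
            |del1 η γ H pol r P Qt h s b| +
      (η ^ 2 * (H : ℝ) * (1 + 4 * effH H γ) * Real.exp (2 * η * BA)) *
        ∑ h ∈ Finset.range H, ∑ s, ∑ b,
          margS rho0 pol (qr η γ H pol r P) P h s * qr η γ H pol r P h s b *
            (aTil η H Qt h s b - softA η γ H pol r P h s b) ^ 2 := by
  set C := Real.exp (2 * η * BA) with hCdef
  have hC0 : (0:ℝ) < C := Real.exp_pos _
  -- basic nonnegativity facts
  have hμ : ∀ h ≤ H, ∀ s, 0 ≤ margS rho0 pol (qr η γ H pol r P) P h s :=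
    margS_nonneg H rho0 hrho0 pol (qr η γ H pol r P) P
      (fun h s b => qr_nonneg η γ H pol r P h s b) hpol0 hP0
  have hGnn : ∀ h ≤ H, ∀ s, 0 ≤ G η γ H pol r P Qt h s := fun h hh s =>
    G_nonneg hη hγ0 H pol r P Qt hpol0 hP0 (H - h) h (by omega) s
  have hdb : ∀ h < H, ∀ s b, |dfun η γ H pol r P Qt h s b| ≤ 2 * BA := by
    intro h hh s b
    have h1 := hA h hh s b
    have h2 := hAt h hh s b
    have : |dfun η γ H pol r P Qt h s b| ≤ |aTil η H Qt h s b| +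
        |softA η γ H pol r P h s b| := abs_sub _ _
    linarith
  -- per-h inequality
  have step_h : ∀ h < H,
      ∑ s, margS rho0 pol (qr η γ H pol r P) P h s *
        ∑ b, |nuTil η H Qt h s b - qr η γ H pol r P h s b| ≤
      η * (∑ s, ∑ b, margS rho0 pol (qr η γ H pol r P) P h s * qr η γ H pol r P h s b *
          |del1 η γ H pol r P Qt h s b|) +
      2 * η * (∑ s, margS rho0 pol (qr η γ H pol r P) P h s * G η γ H pol r P Qt h s) +
      η^2/2 * C * (∑ s, ∑ b, margS rho0 pol (qr η γ H pol r P) P h s *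
          qr η γ H pol r P h s b *
          (aTil η H Qt h s b - softA η γ H pol r P h s b) ^ 2) := by
    intro h hh
    have key : ∀ s, margS rho0 pol (qr η γ H pol r P) P h s *
        (∑ b, |nuTil η H Qt h s b - qr η γ H pol r P h s b|) ≤
        margS rho0 pol (qr η γ H pol r P) P h s *
        (η * ∑ b, qr η γ H pol r P h s b * |del1 η γ H pol r P Qt h s b| +
          2 * η * G η γ H pol r P Qt h s +
          η^2/2 * C * ∑ b, qr η γ H pol r P h s b * (dfun η γ H pol r P Qt h s b)^2) := by
      intro s
      exact mul_le_mul_of_nonneg_left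
        (per_hs hη hγ0 H pol r P Qt hpol0 hP0 hh s (fun b => hdb h hh s b)
          (hGnn h hh.le s) (fun s' => hGnn (h+1) (by omega) s')) (hμ h hh.le s)
    calc ∑ s, margS rho0 pol (qr η γ H pol r P) P h s *
        ∑ b, |nuTil η H Qt h s b - qr η γ H pol r P h s b| ≤
        ∑ s, margS rho0 pol (qr η γ H pol r P) P h s *
        (η * ∑ b, qr η γ H pol r P h s b * |del1 η γ H pol r P Qt h s b| +
          2 * η * G η γ H pol r P Qt h s +
          η^2/2 * C * ∑ b, qr η γ H pol r P h s b * (dfun η γ H pol r P Qt h s b)^2) :=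
          Finset.sum_le_sum fun s _ => key s
      _ = η * (∑ s, ∑ b, margS rho0 pol (qr η γ H pol r P) P h s *
            qr η γ H pol r P h s b * |del1 η γ H pol r P Qt h s b|) +
          2 * η * (∑ s, margS rho0 pol (qr η γ H pol r P) P h s *
            G η γ H pol r P Qt h s) +
          η^2/2 * C * (∑ s, ∑ b, margS rho0 pol (qr η γ H pol r P) P h s *
            qr η γ H pol r P h s b *
            (aTil η H Qt h s b - softA η γ H pol r P h s b) ^ 2) := by
          have expand : ∀ s : S, margS rho0 pol (qr η γ H pol r P) P h s *
              (η * ∑ b, qr η γ H pol r P h s b * |del1 η γ H pol r P Qt h s b| +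
                2 * η * G η γ H pol r P Qt h s +
                η^2/2 * C * ∑ b, qr η γ H pol r P h s b *
                  (dfun η γ H pol r P Qt h s b)^2) =
              η * (∑ b, margS rho0 pol (qr η γ H pol r P) P h s *
                qr η γ H pol r P h s b * |del1 η γ H pol r P Qt h s b|) +
              2 * η * (margS rho0 pol (qr η γ H pol r P) P h s *
                G η γ H pol r P Qt h s) +
              η^2/2 * C * (∑ b, margS rho0 pol (qr η γ H pol r P) P h s *
                qr η γ H pol r P h s b *
                (aTil η H Qt h s b - softA η γ H pol r P h s b) ^ 2) := by
            intro s
            simp only [dfun, Finset.mul_sum]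
            rw [mul_add, mul_add]
            congr 1
            · congr 1
              · rw [Finset.mul_sum]
                congr 1; funext b; ring
              · ring
            · rw [Finset.mul_sum]
              congr 1; funext b; ring
          simp only [expand, Finset.sum_add_distrib, ← Finset.mul_sum]
  -- total LHS bound
  have total : ∑ h ∈ Finset.range H, (H : ℝ) * ∑ s,
      margS rho0 pol (qr η γ H pol r P) P h s *
        ∑ b, |nuTil η H Qt h s b - qr η γ H pol r P h s b| ≤
      η * (H:ℝ) * (∑ h ∈ Finset.range H, ∑ s, ∑ b,
        margS rho0 pol (qr η γ H pol r P) P h s * qr η γ H pol r P h s b *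
          |del1 η γ H pol r P Qt h s b|) +
      2 * η * (H:ℝ) * (∑ h ∈ Finset.range H, ∑ s,
        margS rho0 pol (qr η γ H pol r P) P h s * G η γ H pol r P Qt h s) +
      η^2/2 * C * (H:ℝ) * (∑ h ∈ Finset.range H, ∑ s, ∑ b,
        margS rho0 pol (qr η γ H pol r P) P h s * qr η γ H pol r P h s b *
          (aTil η H Qt h s b - softA η γ H pol r P h s b) ^ 2) := by
    calc ∑ h ∈ Finset.range H, (H : ℝ) * ∑ s,
        margS rho0 pol (qr η γ H pol r P) P h s *
          ∑ b, |nuTil η H Qt h s b - qr η γ H pol r P h s b| ≤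
        ∑ h ∈ Finset.range H, (H:ℝ) *
          (η * (∑ s, ∑ b, margS rho0 pol (qr η γ H pol r P) P h s *
            qr η γ H pol r P h s b * |del1 η γ H pol r P Qt h s b|) +
          2 * η * (∑ s, margS rho0 pol (qr η γ H pol r P) P h s *
            G η γ H pol r P Qt h s) +
          η^2/2 * C * (∑ s, ∑ b, margS rho0 pol (qr η γ H pol r P) P h s *
            qr η γ H pol r P h s b *
            (aTil η H Qt h s b - softA η γ H pol r P h s b) ^ 2)) := by
          apply Finset.sum_le_sum
          intro h hmem
          exact mul_le_mul_of_nonneg_left (step_h h (Finset.mem_range.1 hmem))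
            (Nat.cast_nonneg H)
      _ = _ := by
          simp only [mul_add, Finset.sum_add_distrib, ← Finset.mul_sum]
          ring
  -- bound the G-term
  have hgnn : ∀ l < H, 0 ≤ ∑ s, margS rho0 pol (qr η γ H pol r P) P l s *
      gl η γ H pol r P Qt l s := by
    intro l hl
    apply Finset.sum_nonneg
    intro s _
    exact mul_nonneg (hμ l hl.le s) (gl_nonneg hη γ H pol r P Qt hl s
      (sum_qr_one hη.ne' γ H pol r P hl s) (sum_nuTil_one hη.ne' H Qt hl s))
  have hGsum := sum_G_le hη hγ0 H rho0 pol r P Qt hgnn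
  have hglsum : ∑ l ∈ Finset.range H, ∑ s, margS rho0 pol (qr η γ H pol r P) P l s *
      gl η γ H pol r P Qt l s ≤
      η/2 * C * (∑ h ∈ Finset.range H, ∑ s, ∑ b,
        margS rho0 pol (qr η γ H pol r P) P h s * qr η γ H pol r P h s b *
          (aTil η H Qt h s b - softA η γ H pol r P h s b) ^ 2) := by
    rw [Finset.mul_sum]
    apply Finset.sum_le_sum
    intro h hmem
    have hh := Finset.mem_range.1 hmem
    calc ∑ s, margS rho0 pol (qr η γ H pol r P) P h s * gl η γ H pol r P Qt h s ≤
        ∑ s, margS rho0 pol (qr η γ H pol r P) P h s *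
          (η/2 * C * ∑ b, qr η γ H pol r P h s b * (dfun η γ H pol r P Qt h s b)^2) := by
          apply Finset.sum_le_sum
          intro s _
          exact mul_le_mul_of_nonneg_left
            (gl_le hη γ H pol r P Qt hh s (fun b => hdb h hh s b)
              (sum_qr_one hη.ne' γ H pol r P hh s) (sum_nuTil_one hη.ne' H Qt hh s))
            (hμ h hh.le s)
      _ = η/2 * C * ∑ s, ∑ b, margS rho0 pol (qr η γ H pol r P) P h s *
          qr η γ H pol r P h s b *
          (aTil η H Qt h s b - softA η γ H pol r P h s b) ^ 2 := by
          simp only [dfun, Finset.mul_sum]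
          apply Finset.sum_congr rfl; intro s _
          apply Finset.sum_congr rfl; intro b _
          ring
  -- final arithmetical combination
  set T1 := ∑ h ∈ Finset.range H, ∑ s, ∑ b,
    margS rho0 pol (qr η γ H pol r P) P h s * qr η γ H pol r P h s b *
      |del1 η γ H pol r P Qt h s b| with hT1def
  set T2 := ∑ h ∈ Finset.range H, ∑ s, ∑ b,
    margS rho0 pol (qr η γ H pol r P) P h s * qr η γ H pol r P h s b *
      (aTil η H Qt h s b - softA η γ H pol r P h s b) ^ 2 with hT2def
  set TG := ∑ h ∈ Finset.range H, ∑ s,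
    margS rho0 pol (qr η γ H pol r P) P h s * G η γ H pol r P Qt h s with hTGdef
  set Tg := ∑ l ∈ Finset.range H, ∑ s,
    margS rho0 pol (qr η γ H pol r P) P l s * gl η γ H pol r P Qt l s with hTgdef
  have hT1nn : 0 ≤ T1 := by
    apply Finset.sum_nonneg; intro h hmem
    apply Finset.sum_nonneg; intro s _
    apply Finset.sum_nonneg; intro b _
    have := hμ h (Finset.mem_range.1 hmem).le s
    have := qr_nonneg η γ H pol r P h s b
    positivity
  have hT2nn : 0 ≤ T2 := by
    apply Finset.sum_nonneg; intro h hmem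
    apply Finset.sum_nonneg; intro s _
    apply Finset.sum_nonneg; intro b _
    have := hμ h (Finset.mem_range.1 hmem).le s
    have := qr_nonneg η γ H pol r P h s b
    positivity
  have heff : 0 ≤ effH H γ := Finset.sum_nonneg fun i _ => pow_nonneg hγ0 i
  have hTgnn : 0 ≤ Tg := Finset.sum_nonneg fun l hl => hgnn l (Finset.mem_range.1 hl)
  have hTGb : TG ≤ effH H γ * (η/2 * C * T2) := by
    calc TG ≤ effH H γ * Tg := hGsum
      _ ≤ effH H γ * (η/2 * C * T2) := mul_le_mul_of_nonneg_left hglsum heff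
  have hHnn : (0:ℝ) ≤ (H:ℝ) := Nat.cast_nonneg H
  have p0 : 0 ≤ η * (H:ℝ) * T1 := by positivity
  have p1 : 0 ≤ η^2 * (H:ℝ) * C * T2 := by positivity
  have p2 : 0 ≤ η^2 * (H:ℝ) * C * (effH H γ * T2) :=
    mul_nonneg (by positivity) (mul_nonneg heff hT2nn)
  have hchain : ∑ h ∈ Finset.range H, (H : ℝ) * ∑ s,
      margS rho0 pol (qr η γ H pol r P) P h s *
        ∑ b, |nuTil η H Qt h s b - qr η γ H pol r P h s b| ≤
      η * (H:ℝ) * T1 + 2 * η * (H:ℝ) * (effH H γ * (η/2 * C * T2)) +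
        η^2/2 * C * (H:ℝ) * T2 := by
    refine total.trans ?_
    have := mul_le_mul_of_nonneg_left hTGb (by positivity : (0:ℝ) ≤ 2 * η * (H:ℝ))
    linarith
  refine hchain.trans ?_
  nlinarith [p0, p1, p2]
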